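/- Let H be a complex Hilbert space, 𝒱 and 𝒲 closed subspaces with H = 𝒱 ⊕ 𝒲ᗮ, and P = π_{𝒱,𝒲ᗮ}. Let (W,w) be a fusion frame for 𝒲 with synthesis operator T_W (so T_W has closed range equal to 𝒲 and γ(T_W) > 0). Let ε ≥ 0, f ∈ H, and f_r ∈ 𝒱 with ‖T_W* f_r − T_W* f‖ ≤ ε ‖f‖. Then ‖f_r − P f‖ ≤ ε ‖P‖ γ(T_W)⁻¹ ‖f‖, where γ(T_W) = inf{‖T_W x‖ : ‖x‖ = 1, x ∈ (ker T_W)ᗮ} (so that γ(T_W)⁻¹ is the norm of the Moore–Penrose pseudoinverse of T_W). -/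

import Mathlib

open scoped ENNReal
set_option synthInstance.maxHeartbeats 1000000
set_option maxHeartbeats 1000000
noncomputable section

/-- Reduced minimum modulus of a bounded operator between inner product spaces:
`γ(A) = inf {‖A x‖ : ‖x‖ = 1, x ∈ (ker A)ᗮ}`. -/
def redMinMod {E F : Type*} [NormedAddCommGroup E] [InnerProductSpace ℂ E]
    [NormedAddCommGroup F] [InnerProductSpace ℂ F] (A : E →L[ℂ] F) : ℝ :=
  sInf ((fun x => ‖A x‖) '' {x : E | ‖x‖ = 1 ∧ x ∈ (LinearMap.ker (A : E →ₗ[ℂ] F))ᗮ})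


section Aux
variable {E F : Type*} [NormedAddCommGroup E] [InnerProductSpace ℂ E] [CompleteSpace E]
  [NormedAddCommGroup F] [InnerProductSpace ℂ F] [CompleteSpace F]

lemma redMinMod_nonneg (A : E →L[ℂ] F) : 0 ≤ redMinMod A := by
  apply Real.sInf_nonneg
  rintro y ⟨x, -, rfl⟩
  exact norm_nonneg _

lemma redMinMod_mul_norm_le (A : E →L[ℂ] F) {x : E} (hx : x ∈ (LinearMap.ker (A : E →ₗ[ℂ] F))ᗮ) :
    redMinMod A * ‖x‖ ≤ ‖A x‖ := by
  rcases eq_or_ne x 0 with rfl | hx0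
  · simp
  · have hnx : (0:ℝ) < ‖x‖ := norm_pos_iff.mpr hx0
    have hmem : ‖A ((‖x‖:ℂ)⁻¹ • x)‖ ∈
        ((fun x => ‖A x‖) '' {x : E | ‖x‖ = 1 ∧ x ∈ (LinearMap.ker (A : E →ₗ[ℂ] F))ᗮ}) := by
      refine ⟨(‖x‖:ℂ)⁻¹ • x, ⟨?_, Submodule.smul_mem _ _ hx⟩, rfl⟩
      rw [norm_smul]
      simp [hnx.ne']
    have hb : BddBelow ((fun x => ‖A x‖) '' {x : E | ‖x‖ = 1 ∧ x ∈ (LinearMap.ker (A : E →ₗ[ℂ] F))ᗮ}) :=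
      ⟨0, by rintro y ⟨z, -, rfl⟩; exact norm_nonneg _⟩
    have h1 := csInf_le hb hmem
    have h2 : ‖A ((‖x‖:ℂ)⁻¹ • x)‖ = ‖x‖⁻¹ * ‖A x‖ := by
      rw [map_smul, norm_smul]; simp
    rw [h2] at h1
    calc redMinMod A * ‖x‖ ≤ (‖x‖⁻¹ * ‖A x‖) * ‖x‖ := by
          exact mul_le_mul_of_nonneg_right h1 hnx.le
      _ = ‖A x‖ := by field_simp

end Aux

section Aux2
variable {E F : Type*} [NormedAddCommGroup E] [InnerProductSpace ℂ E] [CompleteSpace E]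
  [NormedAddCommGroup F] [InnerProductSpace ℂ F] [CompleteSpace F]

open ContinuousLinearMap in
lemma redMinMod_mul_norm_le_adjoint (A : E →L[ℂ] F) {h : F}
    (hh : h ∈ LinearMap.range (A : E →ₗ[ℂ] F)) :
    redMinMod A * ‖h‖ ≤ ‖ContinuousLinearMap.adjoint A h‖ := by
  obtain ⟨x, hx⟩ := hh
  haveI : CompleteSpace (LinearMap.ker (A : E →ₗ[ℂ] F)) := (ContinuousLinearMap.isClosed_ker A).completeSpace_coe
  set x' : E := x - (Submodule.orthogonalProjection (LinearMap.ker (A : E →ₗ[ℂ] F)) x : E) with hx'def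
  have hx'mem : x' ∈ (LinearMap.ker (A : E →ₗ[ℂ] F))ᗮ := Submodule.sub_starProjection_mem_orthogonal x
  have hAx' : A x' = h := by
    have hk : A (Submodule.starProjection (LinearMap.ker (A : E →ₗ[ℂ] F)) x) = 0 :=
      (Submodule.orthogonalProjection (LinearMap.ker (A : E →ₗ[ℂ] F)) x).2
    simp [hx'def, map_sub, hk, ← hx]
  have key : ‖h‖ * ‖h‖ ≤ ‖x'‖ * ‖ContinuousLinearMap.adjoint A h‖ := by
    have h1 : (inner ℂ h h : ℂ) = inner ℂ x' (ContinuousLinearMap.adjoint A h) := by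
      rw [ContinuousLinearMap.adjoint_inner_right, hAx']
    calc ‖h‖ * ‖h‖ = RCLike.re (inner ℂ h h : ℂ) := (inner_self_eq_norm_mul_norm h).symm
      _ ≤ ‖(inner ℂ h h : ℂ)‖ := RCLike.re_le_norm _
      _ = ‖(inner ℂ x' (ContinuousLinearMap.adjoint A h) : ℂ)‖ := by rw [h1]
      _ ≤ ‖x'‖ * ‖ContinuousLinearMap.adjoint A h‖ := norm_inner_le_norm _ _
  rcases eq_or_ne h 0 with rfl | hh0
  · simp
  · have hnh : (0:ℝ) < ‖h‖ := norm_pos_iff.mpr hh0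
    have h2 : redMinMod A * ‖x'‖ ≤ ‖h‖ := by
      have := redMinMod_mul_norm_le A hx'mem
      rwa [hAx'] at this
    have h3 : redMinMod A * (‖h‖ * ‖h‖) ≤ ‖h‖ * ‖ContinuousLinearMap.adjoint A h‖ := by
      calc redMinMod A * (‖h‖ * ‖h‖) ≤ redMinMod A * (‖x'‖ * ‖ContinuousLinearMap.adjoint A h‖) :=
            mul_le_mul_of_nonneg_left key (redMinMod_nonneg A)
        _ = (redMinMod A * ‖x'‖) * ‖ContinuousLinearMap.adjoint A h‖ := by ring
        _ ≤ ‖h‖ * ‖ContinuousLinearMap.adjoint A h‖ :=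
            mul_le_mul_of_nonneg_right h2 (norm_nonneg _)
    nlinarith

lemma redMinMod_pos (A : E →L[ℂ] F) (𝒲' : Submodule ℂ F) [CompleteSpace 𝒲']
    (hr : LinearMap.range (A : E →ₗ[ℂ] F) = 𝒲') {h0 : F} (hh0 : h0 ∈ 𝒲') (hne : h0 ≠ 0) :
    0 < redMinMod A := by
  haveI : CompleteSpace (LinearMap.ker (A : E →ₗ[ℂ] F)) := (ContinuousLinearMap.isClosed_ker A).completeSpace_coe
  set K : Submodule ℂ E := (LinearMap.ker (A : E →ₗ[ℂ] F))ᗮ with hK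
  haveI : CompleteSpace K := (Submodule.isClosed_orthogonal _).completeSpace_coe
  have hmemW : ∀ x : K, A (x : E) ∈ 𝒲' := fun x => hr ▸ LinearMap.mem_range_self _ _
  set T₀ : K →L[ℂ] 𝒲' :=
    ContinuousLinearMap.codRestrict (A.comp K.subtypeL) 𝒲' hmemW with hT₀
  have hker : LinearMap.ker (T₀ : K →ₗ[ℂ] 𝒲') = ⊥ := by
    rw [Submodule.eq_bot_iff]
    rintro ⟨x, hx⟩ hx0
    have hAx : A x = 0 := congrArg Subtype.val hx0
    have : (inner ℂ x x : ℂ) = 0 := (Submodule.mem_orthogonal _ _).mp hx x hAx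
    have : x = 0 := inner_self_eq_zero.mp this
    exact Subtype.ext this
  have hrng : LinearMap.range (T₀ : K →ₗ[ℂ] 𝒲') = ⊤ := by
    rw [Submodule.eq_top_iff']
    rintro ⟨v, hv⟩
    obtain ⟨x, hx⟩ := hr ▸ hv
    refine ⟨⟨x - (Submodule.orthogonalProjection (LinearMap.ker (A : E →ₗ[ℂ] F)) x : E),
      Submodule.sub_starProjection_mem_orthogonal x⟩, ?_⟩
    apply Subtype.ext
    have hk : A (Submodule.starProjection (LinearMap.ker (A : E →ₗ[ℂ] F)) x) = 0 :=
      (Submodule.orthogonalProjection (LinearMap.ker (A : E →ₗ[ℂ] F)) x).2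
    simp [hT₀, map_sub, hk, ← hx]
    change A (x - _) = A x
    rw [map_sub, hk, sub_zero]
  set e := ContinuousLinearEquiv.ofBijective T₀ hker hrng with he
  set C : ℝ := ‖(e.symm : 𝒲' →L[ℂ] K)‖ with hC
  have hCle : ∀ v : 𝒲', ‖e.symm v‖ ≤ C * ‖v‖ := fun v =>
    (e.symm : 𝒲' →L[ℂ] K).le_opNorm v
  set u : K := e.symm ⟨h0, hh0⟩ with hu
  have hune : u ≠ 0 := by
    intro h
    apply hne
    have : e u = ⟨h0, hh0⟩ := e.apply_symm_apply _
    rw [h] at this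
    simpa using congrArg Subtype.val this.symm
  have hnu : (0:ℝ) < ‖u‖ := norm_pos_iff.mpr hune
  have hCpos : (0:ℝ) < C := by
    nlinarith [hCle ⟨h0, hh0⟩, norm_nonneg (⟨h0, hh0⟩ : 𝒲')]
  have key : C⁻¹ ≤ redMinMod A := by
    apply le_csInf
    · have hnuv : (0:ℝ) < ‖(u : E)‖ := hnu
      refine ⟨‖A ((‖(u:E)‖:ℂ)⁻¹ • (u:E))‖, ⟨(‖(u:E)‖:ℂ)⁻¹ • (u:E), ⟨?_, Submodule.smul_mem _ _ u.2⟩, rfl⟩⟩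
      rw [norm_smul]
      simp [hnuv.ne']
    · rintro y ⟨z, ⟨hz1, hz2⟩, rfl⟩
      have hz : (⟨z, hz2⟩ : K) = e.symm (e ⟨z, hz2⟩) := (e.symm_apply_apply _).symm
      have hnz : (1:ℝ) ≤ C * ‖e ⟨z, hz2⟩‖ := by
        calc (1:ℝ) = ‖(⟨z, hz2⟩ : K)‖ := hz1.symm
          _ = ‖e.symm (e ⟨z, hz2⟩)‖ := by rw [← hz]
          _ ≤ C * ‖e ⟨z, hz2⟩‖ := hCle _
      have hez : ‖e ⟨z, hz2⟩‖ = ‖A z‖ := by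
        have : e ⟨z, hz2⟩ = T₀ ⟨z, hz2⟩ := by
          rw [he]; exact congrFun (ContinuousLinearEquiv.coeFn_ofBijective T₀ hker hrng) _
        rw [this]
        rfl
      rw [hez] at hnz
      rw [inv_eq_one_div, div_le_iff₀ hCpos]
      linarith
  exact lt_of_lt_of_le (by positivity) key

end Aux2

/-- If `(W,w)` is a fusion frame for `𝒲` and `f_r ∈ 𝒱` is an `ε`-consistent reconstruction
of `f`, then `‖f_r − P f‖ ≤ ε ‖P‖ γ(T_W)⁻¹ ‖f‖`, where `γ(T_W)⁻¹` is the norm of the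
Moore–Penrose pseudoinverse of `T_W`. -/
theorem consistent_reconstruction_error_bound_canonical
    {H : Type*} [NormedAddCommGroup H] [InnerProductSpace ℂ H] [CompleteSpace H]
    {I : Type*} [Countable I]
    (𝒱 𝒲 : Submodule ℂ H) [CompleteSpace 𝒱] [CompleteSpace 𝒲]
    (P : H →L[ℂ] H) (hPidem : P ∘L P = P)
    (hPran : LinearMap.range (P : H →ₗ[ℂ] H) = 𝒱) (hPker : LinearMap.ker (P : H →ₗ[ℂ] H) = 𝒲ᗮ)
    (W : I → Submodule ℂ H) [∀ i, CompleteSpace (W i)] (hW : ∀ i, W i ≤ 𝒲)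
    (w : I → ℝ) (hw : ∀ i, 0 < w i)
    (TW : lp (fun i => W i) 2 →L[ℂ] H)
    (hTW : ∀ g : lp (fun i => W i) 2, HasSum (fun i => (w i : ℂ) • (g i : H)) (TW g))
    (hWfr : LinearMap.range (TW : lp (fun i => W i) 2 →ₗ[ℂ] H) = 𝒲)
    (ε : ℝ) (hε : 0 ≤ ε) (f : H) (fr : H) (hfr : fr ∈ 𝒱)
    (hcons : ‖ContinuousLinearMap.adjoint TW fr - ContinuousLinearMap.adjoint TW f‖ ≤ ε * ‖f‖) :
    ‖fr - P f‖ ≤ ε * ‖P‖ * (redMinMod TW)⁻¹ * ‖f‖ := by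
  set Tad := ContinuousLinearMap.adjoint TW with hTadj
  -- P fr = fr
  have hPfr : P fr = fr := by
    rw [← hPran] at hfr
    obtain ⟨y, hy⟩ := hfr
    calc P fr = P (P y) := by rw [← hy]; rfl
      _ = (P ∘L P) y := rfl
      _ = P y := by rw [hPidem]
      _ = fr := hy
  set g : H := fr - f with hg
  set h : H := (Submodule.orthogonalProjection 𝒲 g : H) with hh
  have hghmem : g - h ∈ 𝒲ᗮ := Submodule.sub_starProjection_mem_orthogonal g
  -- fr - P f = P h
  have heq : fr - P f = P h := by
    have h0 : P (g - h) = 0 := by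
      have : g - h ∈ LinearMap.ker (P : H →ₗ[ℂ] H) := by rw [hPker]; exact hghmem
      exact LinearMap.mem_ker.mp this
    have : P g - P h = 0 := by rw [← map_sub]; exact h0
    calc fr - P f = P fr - P f := by rw [hPfr]
      _ = P g := by rw [hg, map_sub]
      _ = P h := sub_eq_zero.mp this
  -- adjoint kills 𝒲ᗮ
  have hadj0 : ∀ u : H, u ∈ 𝒲ᗮ → Tad u = 0 := by
    intro u hu
    have : (inner ℂ (Tad u) (Tad u) : ℂ) = 0 := by
      rw [hTadj, ContinuousLinearMap.adjoint_inner_left]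
      have hmem : TW (ContinuousLinearMap.adjoint TW u) ∈ 𝒲 := by
        rw [← hWfr]; exact LinearMap.mem_range_self _ _
      exact (Submodule.mem_orthogonal' 𝒲 u).mp hu _ hmem
    exact inner_self_eq_zero.mp this
  have hTadgh : Tad h = Tad g := by
    have : Tad (g - h) = 0 := hadj0 _ hghmem
    rw [map_sub] at this
    have := sub_eq_zero.mp this
    exact this.symm
  have hTadh : ‖Tad h‖ ≤ ε * ‖f‖ := by
    rw [hTadgh]
    calc ‖Tad g‖ = ‖Tad fr - Tad f‖ := by rw [hg, map_sub]
      _ ≤ ε * ‖f‖ := hcons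
  have hhW : h ∈ 𝒲 := (Submodule.orthogonalProjection 𝒲 g).2
  have hhrange : h ∈ LinearMap.range (TW : lp (fun i => W i) 2 →ₗ[ℂ] H) := by rw [hWfr]; exact hhW
  have hγh : redMinMod TW * ‖h‖ ≤ ε * ‖f‖ :=
    (redMinMod_mul_norm_le_adjoint TW hhrange).trans hTadh
  rcases eq_or_ne h 0 with hz | hne
  · rw [heq, hz, map_zero, norm_zero]
    have : (0:ℝ) ≤ (redMinMod TW)⁻¹ := inv_nonneg.mpr (redMinMod_nonneg TW)
    positivity
  · have hγpos : 0 < redMinMod TW := redMinMod_pos TW 𝒲 hWfr hhW hne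
    have hhle : ‖h‖ ≤ (redMinMod TW)⁻¹ * (ε * ‖f‖) := by
      rw [← mul_le_mul_iff_right₀ hγpos, ← mul_assoc, mul_inv_cancel₀ hγpos.ne', one_mul]
      exact hγh
    calc ‖fr - P f‖ = ‖P h‖ := by rw [heq]
      _ ≤ ‖P‖ * ‖h‖ := P.le_opNorm h
      _ ≤ ‖P‖ * ((redMinMod TW)⁻¹ * (ε * ‖f‖)) :=
          mul_le_mul_of_nonneg_left hhle (norm_nonneg _)
      _ = ε * ‖P‖ * (redMinMod TW)⁻¹ * ‖f‖ := by ring
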